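/- (Theorem 1, fidelity form) For every density operator ρ on ℂ^d ⊗ ℂ^d (positive semidefinite with trace 1), the squared fidelity with the target pure state satisfies F(ρ, ψ)² := tr(ρ |ψ⟩⟨ψ|) ≥ tr(ρP) + tr(ρQ) − 1, where P = Σ_{j=1}^d |e_j⟩⟨e_j| ⊗ |e_j⟩⟨e_j| and Q = Σ_{α=1}^d |â_α⟩⟨â_α| ⊗ |ψ_α⟩⟨ψ_α|. -/

import Mathlib

open Matrix Kronecker
open scoped BigOperators ComplexOrder

noncomputable section

/-- Standard basis vector `e_j` of `ℂ^d`. -/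
def eVec (d : ℕ) (j : Fin d) : Fin d → ℂ := fun k => if k = j then 1 else 0

/-- Elementary tensor of two vectors in `ℂ^d`. -/
def tensorVec {d : ℕ} (v w : Fin d → ℂ) : Fin d × Fin d → ℂ := fun p => v p.1 * w p.2

/-- Outer product `|v⟩⟨w|`. -/
def outer {n : Type*} (v w : n → ℂ) : Matrix n n ℂ := Matrix.vecMulVec v (star w)

/-- Conjugate (mutually unbiased) basis vectors `â_α`. -/
def ahat (d : ℕ) (phi : Fin d → Fin d → ℝ) (α : Fin d) : Fin d → ℂ :=
  fun j => ((1 / Real.sqrt d : ℝ) : ℂ) * Complex.exp (Complex.I * (phi j α : ℂ))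

/-- The unit vectors `ψ_α = Σ_j √λ_j e^{-iφ(j,α)} e_j`. -/
def psiAlpha (d : ℕ) (lam : Fin d → ℝ) (phi : Fin d → Fin d → ℝ) (α : Fin d) : Fin d → ℂ :=
  fun j => ((Real.sqrt (lam j) : ℝ) : ℂ) * Complex.exp (-Complex.I * (phi j α : ℂ))

/-- The Schmidt-form state `ψ = Σ_j √λ_j e_j ⊗ e_j` in `ℂ^d ⊗ ℂ^d`. -/
def psiVec (d : ℕ) (lam : Fin d → ℝ) : Fin d × Fin d → ℂ :=
  ∑ j, ((Real.sqrt (lam j) : ℝ) : ℂ) • tensorVec (eVec d j) (eVec d j)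

/-- The projector `P = Σ_j |e_j⟩⟨e_j| ⊗ |e_j⟩⟨e_j|`. -/
def Pop (d : ℕ) : Matrix (Fin d × Fin d) (Fin d × Fin d) ℂ :=
  ∑ j, (outer (eVec d j) (eVec d j)) ⊗ₖ (outer (eVec d j) (eVec d j))

/-- The projector `Q = Σ_α |â_α⟩⟨â_α| ⊗ |ψ_α⟩⟨ψ_α|`. -/
def Qop (d : ℕ) (lam : Fin d → ℝ) (phi : Fin d → Fin d → ℝ) :
    Matrix (Fin d × Fin d) (Fin d × Fin d) ℂ :=
  ∑ α, (outer (ahat d phi α) (ahat d phi α)) ⊗ₖ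
      (outer (psiAlpha d lam phi α) (psiAlpha d lam phi α))
section Aux
set_option linter.unusedSectionVars false
variable {n : Type*} [Fintype n] [DecidableEq n]

lemma outer_mulVec (v w x : n → ℂ) : outer v w *ᵥ x = (star w ⬝ᵥ x) • v := by
  ext i
  simp [outer, mulVec, vecMulVec, dotProduct, Finset.mul_sum, mul_comm, mul_left_comm]

lemma quadForm_outer (v x : n → ℂ) :
    star x ⬝ᵥ (outer v v *ᵥ x) = ((Complex.normSq (star v ⬝ᵥ x) : ℝ) : ℂ) := by
  rw [outer_mulVec, dotProduct_smul]
  have h : star x ⬝ᵥ v = starRingEnd ℂ (star v ⬝ᵥ x) := by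
    simp [dotProduct, Finset.sum_congr, map_sum, mul_comm]
  rw [h, smul_eq_mul, Complex.normSq_eq_conj_mul_self]
  ring

lemma diag_nonneg_of_psd {A : Matrix n n ℂ} (hA : A.PosSemidef) (i : n) :
    0 ≤ A i i := by
  exact hA.diag_nonneg

lemma trace_re_nonneg_of_psd {A : Matrix n n ℂ} (hA : A.PosSemidef) : 0 ≤ A.trace.re := by
  have h : (0:ℂ) ≤ A.trace := by
    rw [Matrix.trace]
    exact Finset.sum_nonneg fun i _ => diag_nonneg_of_psd hA i
  exact (Complex.le_def.mp h).1

open MatrixOrder in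
lemma trace_mul_re_nonneg {A B : Matrix n n ℂ} (hA : A.PosSemidef) (hB : B.PosSemidef) :
    0 ≤ (A * B).trace.re := by
  obtain ⟨C, hC⟩ := CStarAlgebra.nonneg_iff_eq_star_mul_self.mp (Matrix.nonneg_iff_posSemidef.mpr hB)
  rw [Matrix.star_eq_conjTranspose] at hC
  subst hC
  have h1 : (A * (Cᴴ * C)).trace = (C * A * Cᴴ).trace := by
    rw [← Matrix.mul_assoc, Matrix.trace_mul_cycle]
  rw [h1]
  exact trace_re_nonneg_of_psd (hA.mul_mul_conjTranspose_same C)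

end Aux

section Mid
set_option linter.unusedSectionVars false
variable {d : ℕ}

lemma conj_exp_negI (t : ℝ) :
    (starRingEnd ℂ) (Complex.exp (-Complex.I * t)) = Complex.exp (Complex.I * t) := by
  rw [← Complex.exp_conj]
  congr 1
  simp

lemma conj_exp_I (t : ℝ) :
    (starRingEnd ℂ) (Complex.exp (Complex.I * t)) = Complex.exp (-Complex.I * t) := by
  rw [← Complex.exp_conj]
  congr 1
  simp

lemma expI_mul_exp_negI (t : ℝ) :
    Complex.exp (Complex.I * t) * Complex.exp (-Complex.I * t) = 1 := by
  rw [← Complex.exp_add, show Complex.I * t + -Complex.I * t = 0 by ring, Complex.exp_zero]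

lemma outer_kron (a b c e : Fin d → ℂ) :
    (outer a b) ⊗ₖ (outer c e) = outer (tensorVec a c) (tensorVec b e) := by
  ext ⟨i, j⟩ ⟨k, l⟩
  simp [outer, Matrix.vecMulVec_apply, tensorVec, Matrix.kroneckerMap_apply]
  ring

lemma Pop_eq : Pop d = ∑ j, outer (tensorVec (eVec d j) (eVec d j)) (tensorVec (eVec d j) (eVec d j)) := by
  simp [Pop, outer_kron]

lemma Qop_eq (lam : Fin d → ℝ) (phi : Fin d → Fin d → ℝ) :
    Qop d lam phi = ∑ α, outer (tensorVec (ahat d phi α) (psiAlpha d lam phi α))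
      (tensorVec (ahat d phi α) (psiAlpha d lam phi α)) := by
  simp [Qop, outer_kron]

lemma tensor_dot (v w v' w' : Fin d → ℂ) :
    star (tensorVec v w) ⬝ᵥ tensorVec v' w' = (star v ⬝ᵥ v') * (star w ⬝ᵥ w') := by
  simp only [dotProduct, tensorVec, Pi.star_apply, Fintype.sum_prod_type, star_mul']
  rw [Finset.sum_mul_sum]
  exact Finset.sum_congr rfl fun x _ => Finset.sum_congr rfl fun y _ => by ring

lemma psi_alpha_norm (lam : Fin d → ℝ) (phi : Fin d → Fin d → ℝ) (hlam : ∀ j, 0 ≤ lam j)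
    (hsum : ∑ j, lam j = 1) (α : Fin d) :
    star (psiAlpha d lam phi α) ⬝ᵥ psiAlpha d lam phi α = 1 := by
  have hterm : ∀ k, (starRingEnd ℂ) (psiAlpha d lam phi α k) * psiAlpha d lam phi α k
      = ((lam k : ℝ) : ℂ) := by
    intro k
    simp only [psiAlpha, _root_.map_mul, Complex.conj_ofReal, conj_exp_negI]
    rw [mul_mul_mul_comm, ← Complex.ofReal_mul, Real.mul_self_sqrt (hlam k),
      expI_mul_exp_negI, mul_one]
  simp only [dotProduct, Pi.star_apply, RCLike.star_def, hterm]
  rw [← Complex.ofReal_sum, hsum, Complex.ofReal_one]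

lemma g_orth (lam : Fin d → ℝ) (phi : Fin d → Fin d → ℝ) (hlam : ∀ j, 0 ≤ lam j)
    (hsum : ∑ j, lam j = 1)
    (hMUB : ∀ α β : Fin d, star (ahat d phi α) ⬝ᵥ ahat d phi β = if α = β then 1 else 0)
    (α β : Fin d) :
    star (tensorVec (ahat d phi α) (psiAlpha d lam phi α)) ⬝ᵥ
      tensorVec (ahat d phi β) (psiAlpha d lam phi β) = if α = β then 1 else 0 := by
  rw [tensor_dot, hMUB]
  by_cases h : α = β
  · subst h
    rw [psi_alpha_norm lam phi hlam hsum]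
    simp
  · simp [h]

end Mid

section Mid2
set_option linter.unusedSectionVars false
variable {d : ℕ}

lemma psiVec_apply (lam : Fin d → ℝ) (p : Fin d × Fin d) :
    psiVec d lam p = if p.1 = p.2 then ((Real.sqrt (lam p.1) : ℝ) : ℂ) else 0 := by
  obtain ⟨j, k⟩ := p
  simp only [psiVec, Finset.sum_apply, Pi.smul_apply, tensorVec, eVec, smul_eq_mul]
  rw [Finset.sum_eq_single j]
  · by_cases h : j = k
    · subst h; simp
    · simp [h, Ne.symm h]
  · intro b _ hb
    simp [Ne.symm hb]
  · simp

lemma f_dot (j : Fin d) (x : Fin d × Fin d → ℂ) :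
    star (tensorVec (eVec d j) (eVec d j)) ⬝ᵥ x = x (j, j) := by
  simp only [dotProduct, tensorVec, Pi.star_apply, eVec, Fintype.sum_prod_type]
  rw [Finset.sum_eq_single j]
  · rw [Finset.sum_eq_single j]
    · simp
    · intro b _ hb
      simp [hb]
    · simp
  · intro b _ hb
    rw [Finset.sum_eq_zero]
    intro k _
    simp [hb]
  · simp

lemma norm_dot (v : Fin d × Fin d → ℂ) :
    star v ⬝ᵥ v = ((∑ p, Complex.normSq (v p) : ℝ) : ℂ) := by
  push_cast
  simp only [dotProduct, Pi.star_apply, RCLike.star_def]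
  exact Finset.sum_congr rfl fun p _ => by
    rw [← Complex.normSq_eq_conj_mul_self]

lemma row_orth (phi : Fin d → Fin d → ℝ)
    (hMUB : ∀ α β : Fin d, star (ahat d phi α) ⬝ᵥ ahat d phi β = if α = β then 1 else 0)
    (j k : Fin d) :
    ∑ α, ahat d phi α j * (starRingEnd ℂ) (ahat d phi α k) = if j = k then 1 else 0 := by
  classical
  set U : Matrix (Fin d) (Fin d) ℂ := Matrix.of (fun j α => ahat d phi α j) with hU
  have h1 : Uᴴ * U = 1 := by
    ext α β
    have := hMUB α β
    simpa [Matrix.mul_apply, hU, Matrix.conjTranspose_apply, dotProduct, Matrix.one_apply] using this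
  have h2 : U * Uᴴ = 1 := mul_eq_one_comm.mp h1
  have h3 := congrFun (congrFun (congrArg (fun M => (M : Matrix (Fin d) (Fin d) ℂ)) h2) j) k
  simpa [Matrix.mul_apply, hU, Matrix.conjTranspose_apply, Matrix.one_apply] using h3

lemma sum_g (hd : 1 ≤ d) (lam : Fin d → ℝ) (phi : Fin d → Fin d → ℝ)
    (hMUB : ∀ α β : Fin d, star (ahat d phi α) ⬝ᵥ ahat d phi β = if α = β then 1 else 0) :
    ∑ α, tensorVec (ahat d phi α) (psiAlpha d lam phi α)
      = ((Real.sqrt d : ℝ) : ℂ) • psiVec d lam := by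
  have hdpos : (0:ℝ) < Real.sqrt d :=
    Real.sqrt_pos.mpr (by exact_mod_cast Nat.lt_of_lt_of_le Nat.zero_lt_one hd)
  have hne : ((Real.sqrt d : ℝ) : ℂ) ≠ 0 := by
    exact_mod_cast hdpos.ne'
  funext p
  obtain ⟨j, k⟩ := p
  have hterm : ∀ α, tensorVec (ahat d phi α) (psiAlpha d lam phi α) (j, k)
      = ((Real.sqrt d * Real.sqrt (lam k) : ℝ) : ℂ) *
        (ahat d phi α j * (starRingEnd ℂ) (ahat d phi α k)) := by
    intro α
    simp only [tensorVec, ahat, psiAlpha, _root_.map_mul, Complex.conj_ofReal, conj_exp_I]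
    push_cast
    field_simp
  simp only [Finset.sum_apply, hterm, Pi.smul_apply, smul_eq_mul]
  rw [← Finset.mul_sum, row_orth phi hMUB, psiVec_apply]
  by_cases h : j = k
  · subst h
    simp
  · simp [h]

end Mid2

section Big
set_option linter.unusedSectionVars false
set_option maxHeartbeats 1000000
variable {d : ℕ}

lemma dot_conj (v x : Fin d × Fin d → ℂ) :
    star x ⬝ᵥ v = starRingEnd ℂ (star v ⬝ᵥ x) := by
  simp only [dotProduct, Pi.star_apply, RCLike.star_def, map_sum, _root_.map_mul,
    Complex.conj_conj]
  exact Finset.sum_congr rfl fun i _ => by ring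

lemma dot_sum_right {m : ℕ} (v : Fin d × Fin d → ℂ) (f : Fin m → Fin d × Fin d → ℂ) :
    v ⬝ᵥ (∑ i, f i) = ∑ i, v ⬝ᵥ f i := by
  simp only [dotProduct, Finset.sum_apply, Finset.mul_sum]
  exact Finset.sum_comm

lemma dot_sum_left {m : ℕ} (v : Fin d × Fin d → ℂ) (f : Fin m → Fin d × Fin d → ℂ) :
    (∑ i, f i) ⬝ᵥ v = ∑ i, f i ⬝ᵥ v := by
  simp only [dotProduct, Finset.sum_apply, Finset.sum_mul]
  exact Finset.sum_comm

lemma sum_mulVec' {m : ℕ} (A : Fin m → Matrix (Fin d × Fin d) (Fin d × Fin d) ℂ)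
    (x : Fin d × Fin d → ℂ) : (∑ i, A i) *ᵥ x = ∑ i, (A i *ᵥ x) := by
  funext p
  simp only [Matrix.mulVec, dotProduct, Finset.sum_apply, Matrix.sum_apply, Finset.sum_mul]
  exact Finset.sum_comm

lemma outer_self_herm (v : Fin d × Fin d → ℂ) : (outer v v)ᴴ = outer v v := by
  ext i j
  simp only [Matrix.conjTranspose_apply, outer, Matrix.vecMulVec_apply, Pi.star_apply,
    RCLike.star_def, _root_.map_mul, Complex.conj_conj]
  ring

lemma g_diag (lam : Fin d → ℝ) (phi : Fin d → Fin d → ℝ) (α j : Fin d) :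
    tensorVec (ahat d phi α) (psiAlpha d lam phi α) (j, j)
      = ((Real.sqrt (lam j) / Real.sqrt d : ℝ) : ℂ) := by
  simp only [tensorVec, ahat, psiAlpha]
  push_cast
  rw [show (1 / (Real.sqrt d : ℂ)) * Complex.exp (Complex.I * (phi j α : ℝ)) *
      ((Real.sqrt (lam j) : ℂ) * Complex.exp (-Complex.I * (phi j α : ℝ)))
      = ((Real.sqrt (lam j) : ℂ) / (Real.sqrt d : ℂ)) *
        (Complex.exp (Complex.I * (phi j α : ℝ)) * Complex.exp (-Complex.I * (phi j α : ℝ)))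
      from by ring, expI_mul_exp_negI, mul_one]

lemma psi_dot (lam : Fin d → ℝ) (x : Fin d × Fin d → ℂ) :
    star (psiVec d lam) ⬝ᵥ x = ∑ j, ((Real.sqrt (lam j) : ℝ) : ℂ) * x (j, j) := by
  simp only [dotProduct, Pi.star_apply, RCLike.star_def, Fintype.sum_prod_type]
  apply Finset.sum_congr rfl
  intro j _
  rw [Finset.sum_eq_single j]
  · rw [psiVec_apply]
    simp
  · intro k _ hk
    rw [psiVec_apply]
    simp [Ne.symm hk]
  · simp

lemma M_psd (hd : 1 ≤ d) (lam : Fin d → ℝ) (hlam : ∀ j, 0 ≤ lam j)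
    (hsum : ∑ j, lam j = 1) (phi : Fin d → Fin d → ℝ)
    (hMUB : ∀ α β : Fin d, star (ahat d phi α) ⬝ᵥ ahat d phi β = if α = β then 1 else 0) :
    (outer (psiVec d lam) (psiVec d lam) + 1 - Pop d - Qop d lam phi).PosSemidef := by
  classical
  set ψ := psiVec d lam with hψ
  set g : Fin d → (Fin d × Fin d → ℂ) :=
    fun α => tensorVec (ahat d phi α) (psiAlpha d lam phi α) with hg
  refine Matrix.PosSemidef.of_dotProduct_mulVec_nonneg ?_ ?_
  · -- Hermitian
    have hP : (Pop d)ᴴ = Pop d := by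
      rw [Pop_eq, Matrix.conjTranspose_sum]
      exact Finset.sum_congr rfl fun j _ => outer_self_herm _
    have hQ : (Qop d lam phi)ᴴ = Qop d lam phi := by
      rw [Qop_eq, Matrix.conjTranspose_sum]
      exact Finset.sum_congr rfl fun α _ => outer_self_herm _
    show _ = _
    rw [Matrix.conjTranspose_sub, Matrix.conjTranspose_sub, Matrix.conjTranspose_add,
      Matrix.conjTranspose_one, outer_self_herm, hP, hQ]
  · intro x
    -- quadratic form
    set c : ℂ := star ψ ⬝ᵥ x with hc
    set b : Fin d → ℂ := fun α => star (g α) ⬝ᵥ x with hb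
    have hform : star x ⬝ᵥ ((outer ψ ψ + 1 - Pop d - Qop d lam phi) *ᵥ x)
        = ((Complex.normSq c + ∑ p, Complex.normSq (x p)
            - ∑ j, Complex.normSq (x (j, j)) - ∑ α, Complex.normSq (b α) : ℝ) : ℂ) := by
      rw [Matrix.sub_mulVec, Matrix.sub_mulVec, Matrix.add_mulVec, Matrix.one_mulVec]
      rw [dotProduct_sub, dotProduct_sub, dotProduct_add]
      rw [quadForm_outer, norm_dot]
      have hPform : star x ⬝ᵥ (Pop d *ᵥ x) = ((∑ j, Complex.normSq (x (j, j)) : ℝ) : ℂ) := by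
        rw [Pop_eq, sum_mulVec', dot_sum_right]
        rw [Complex.ofReal_sum]
        exact Finset.sum_congr rfl fun j _ => by
          rw [quadForm_outer, f_dot]
      have hQform : star x ⬝ᵥ (Qop d lam phi *ᵥ x)
          = ((∑ α, Complex.normSq (b α) : ℝ) : ℂ) := by
        rw [Qop_eq, sum_mulVec', dot_sum_right]
        rw [Complex.ofReal_sum]
        exact Finset.sum_congr rfl fun α _ => by
          rw [quadForm_outer]
      rw [hPform, hQform]
      push_cast
      ring
    rw [hform]
    rw [Complex.zero_le_real]
    -- the real inequality
    set r : Fin d × Fin d → ℂ := x - ∑ α, b α • g α with hr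
    set t : Fin d → ℂ := fun j => x (j, j) - ((Real.sqrt (lam j) : ℝ) : ℂ) * c with ht
    have hgsum : ∑ α, g α = ((Real.sqrt d : ℝ) : ℂ) • ψ := by
      simp only [hg, hψ]
      exact sum_g hd lam phi hMUB
    have hsb : ∑ α, b α = ((Real.sqrt d : ℝ) : ℂ) * c := by
      calc ∑ α, b α = star (∑ α, g α) ⬝ᵥ x := by
            rw [star_sum, dot_sum_left]
        _ = ((Real.sqrt d : ℝ) : ℂ) * c := by
            rw [hgsum, star_smul, smul_dotProduct, hc]
            simp [smul_eq_mul]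
    have hne : ((Real.sqrt d : ℝ) : ℂ) ≠ 0 := by
      have : (0:ℝ) < Real.sqrt d :=
        Real.sqrt_pos.mpr (by exact_mod_cast Nat.lt_of_lt_of_le Nat.zero_lt_one hd)
      exact_mod_cast this.ne'
    have key1 : ∀ j, r (j, j) = t j := by
      intro j
      simp only [hr, Pi.sub_apply, Finset.sum_apply, Pi.smul_apply, smul_eq_mul]
      have hK : ∀ α : Fin d, g α (j, j) = ((Real.sqrt (lam j) / Real.sqrt d : ℝ) : ℂ) := by
        intro α
        simp only [hg]
        exact g_diag lam phi α j
      rw [Finset.sum_congr rfl (fun α _ => by rw [hK α]), ← Finset.sum_mul, hsb, ht]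
      push_cast
      field_simp
    have hq1 : star (∑ α, b α • g α) ⬝ᵥ x = ((∑ α, Complex.normSq (b α) : ℝ) : ℂ) := by
      rw [star_sum]
      rw [show (∑ α, star (b α • g α)) = ∑ α, (starRingEnd ℂ) (b α) • star (g α) from
        Finset.sum_congr rfl fun α _ => by rw [star_smul]; rfl]
      rw [dot_sum_left, Complex.ofReal_sum]
      exact Finset.sum_congr rfl fun α _ => by
        rw [smul_dotProduct, smul_eq_mul, show star (g α) ⬝ᵥ x = b α from rfl,
          ← Complex.normSq_eq_conj_mul_self]
    have hgq : ∀ α, star (g α) ⬝ᵥ (∑ β, b β • g β) = b α := by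
      intro α
      rw [dot_sum_right]
      have : ∀ β, star (g α) ⬝ᵥ (b β • g β) = b β * (if α = β then 1 else 0) := by
        intro β
        rw [dotProduct_smul, smul_eq_mul]
        congr 1
        simp only [hg]
        exact g_orth lam phi hlam hsum hMUB α β
      rw [Finset.sum_congr rfl fun β _ => this β]
      simp
    have hq3 : star (∑ α, b α • g α) ⬝ᵥ (∑ β, b β • g β)
        = ((∑ α, Complex.normSq (b α) : ℝ) : ℂ) := by
      rw [star_sum]
      rw [show (∑ α, star (b α • g α)) = ∑ α, (starRingEnd ℂ) (b α) • star (g α) from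
        Finset.sum_congr rfl fun α _ => by rw [star_smul]; rfl]
      rw [dot_sum_left, Complex.ofReal_sum]
      exact Finset.sum_congr rfl fun α _ => by
        rw [smul_dotProduct, smul_eq_mul, hgq α, ← Complex.normSq_eq_conj_mul_self]
    have key2 : star r ⬝ᵥ r = star x ⬝ᵥ x - ((∑ α, Complex.normSq (b α) : ℝ) : ℂ) := by
      rw [hr, star_sub, sub_dotProduct, dotProduct_sub, dotProduct_sub]
      rw [hq1, hq3]
      have hxq : star x ⬝ᵥ (∑ α, b α • g α) = ((∑ α, Complex.normSq (b α) : ℝ) : ℂ) := by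
        rw [dot_conj, hq1]
        rw [Complex.conj_ofReal]
      rw [hxq]
      ring
    have key3 : ∑ p, Complex.normSq (r p)
        = ∑ p, Complex.normSq (x p) - ∑ α, Complex.normSq (b α) := by
      have := key2
      rw [norm_dot, norm_dot] at this
      exact_mod_cast this
    have key4 : ∑ j, Complex.normSq (t j) ≤ ∑ p, Complex.normSq (r p) := by
      calc ∑ j, Complex.normSq (t j) = ∑ j, Complex.normSq (r (j, j)) := by
            exact Finset.sum_congr rfl fun j _ => by rw [key1 j]
        _ ≤ ∑ j, ∑ k, Complex.normSq (r (j, k)) := by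
            apply Finset.sum_le_sum
            intro j _
            exact Finset.single_le_sum (f := fun k => Complex.normSq (r (j, k)))
              (fun k _ => Complex.normSq_nonneg _) (Finset.mem_univ j)
        _ = ∑ p, Complex.normSq (r p) := by rw [Fintype.sum_prod_type]
    have key5 : ∑ j, ((Real.sqrt (lam j) : ℝ) : ℂ) * t j = 0 := by
      simp only [ht, mul_sub]
      rw [Finset.sum_sub_distrib]
      have e1 : ∑ j, ((Real.sqrt (lam j) : ℝ) : ℂ) * x (j, j) = c := by
        rw [hc, hψ, psi_dot]
      have e2 : ∑ j, ((Real.sqrt (lam j) : ℝ) : ℂ) * (((Real.sqrt (lam j) : ℝ) : ℂ) * c) = c := by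
        rw [show (∑ j, ((Real.sqrt (lam j) : ℝ) : ℂ) * (((Real.sqrt (lam j) : ℝ) : ℂ) * c))
            = (∑ j, ((lam j : ℝ) : ℂ)) * c from by
          rw [Finset.sum_mul]
          exact Finset.sum_congr rfl fun j _ => by
            rw [← mul_assoc, ← Complex.ofReal_mul, Real.mul_self_sqrt (hlam j)]]
        rw [← Complex.ofReal_sum, hsum, Complex.ofReal_one, one_mul]
      rw [e1, e2, sub_self]
    have crossterm : ∑ j, ((((Real.sqrt (lam j) : ℝ) : ℂ) * c) * (starRingEnd ℂ) (t j)).re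
        = 0 := by
      have e : ∀ j, (((Real.sqrt (lam j) : ℝ) : ℂ) * c) * (starRingEnd ℂ) (t j)
          = c * (starRingEnd ℂ) (((Real.sqrt (lam j) : ℝ) : ℂ) * t j) := by
        intro j
        rw [_root_.map_mul, Complex.conj_ofReal]
        ring
      rw [Finset.sum_congr rfl (fun j _ => congrArg Complex.re (e j)), ← Complex.re_sum,
        ← Finset.mul_sum, ← map_sum, key5, map_zero, mul_zero, Complex.zero_re]
    have key6 : ∑ j, Complex.normSq (x (j, j))
        = Complex.normSq c + ∑ j, Complex.normSq (t j) := by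
      have hx : ∀ j, x (j, j) = ((Real.sqrt (lam j) : ℝ) : ℂ) * c + t j := by
        intro j
        simp only [ht]
        ring
      have e : ∀ j, Complex.normSq (x (j, j))
          = lam j * Complex.normSq c + Complex.normSq (t j)
            + 2 * ((((Real.sqrt (lam j) : ℝ) : ℂ) * c) * (starRingEnd ℂ) (t j)).re := by
        intro j
        rw [hx j, Complex.normSq_add, Complex.normSq_mul, Complex.normSq_ofReal,
          Real.mul_self_sqrt (hlam j)]
      rw [Finset.sum_congr rfl fun j _ => e j]
      rw [Finset.sum_add_distrib, Finset.sum_add_distrib, ← Finset.sum_mul,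
        ← Finset.mul_sum, crossterm, hsum]
      ring
    linarith [key3, key4, key6]

end Big


/-- Theorem 1, fidelity form: for every density operator `ρ`,
`tr(ρ|ψ⟩⟨ψ|) ≥ tr(ρP) + tr(ρQ) − 1`. -/
theorem stmt6 (d : ℕ) (hd : 1 ≤ d) (lam : Fin d → ℝ)
    (hlam : ∀ j, 0 ≤ lam j) (hsum : ∑ j, lam j = 1)
    (phi : Fin d → Fin d → ℝ)
    (hMUB : ∀ α β : Fin d,
      star (ahat d phi α) ⬝ᵥ ahat d phi β = if α = β then 1 else 0)
    (ρ : Matrix (Fin d × Fin d) (Fin d × Fin d) ℂ)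
    (hρ : ρ.PosSemidef) (hρtr : ρ.trace = 1) :
    (ρ * outer (psiVec d lam) (psiVec d lam)).trace.re ≥
      (ρ * Pop d).trace.re + (ρ * Qop d lam phi).trace.re - 1 := by
  have hM := M_psd hd lam hlam hsum phi hMUB
  have htr := trace_mul_re_nonneg hρ hM
  have hexp : (ρ * (outer (psiVec d lam) (psiVec d lam) + 1 - Pop d - Qop d lam phi)).trace
      = (ρ * outer (psiVec d lam) (psiVec d lam)).trace + ρ.trace
        - (ρ * Pop d).trace - (ρ * Qop d lam phi).trace := by
    rw [Matrix.mul_sub, Matrix.mul_sub, Matrix.mul_add, Matrix.mul_one,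
      Matrix.trace_sub, Matrix.trace_sub, Matrix.trace_add]
  rw [hexp, hρtr] at htr
  simp only [Complex.sub_re, Complex.add_re, Complex.one_re] at htr
  linarith
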